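/- Let V = ℝ^{K×n₁} × ℝ^{n₁×d} and let Φ : V → ℝ be differentiable with ∇Φ(w,u) having strictly positive entries for all (w,u) ∈ S_{++}. Then (w*,u*) ∈ S_{++} is a constrained critical point of Φ on S_{++} — i.e., there exist scalars λ_1,…,λ_{K+1} such that ∇_{w_j}Φ(w*,u*) = λ_j ψ_{p_w}(w*_j) for all j ∈ [K] and ∇_u Φ(w*,u*) = λ_{K+1} ψ_{p_u}(u*) — if and only if (w*,u*) is a fixed point of G^Φ, i.e. G^Φ(w*,u*) = (w*,u*). -/

import Mathlib

noncomputable section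

open Real Filter Topology

/-- Parameter space of a one-hidden-layer network: pairs `(w, u)`. -/
abbrev PV (K n1 d : ℕ) : Type :=
  (Fin K → Fin n1 → ℝ) × (Fin n1 → Fin d → ℝ)

/-- Entrywise `p`-norm of a vector. -/
def pnorm {ι : Type} [Fintype ι] (p : ℝ) (x : ι → ℝ) : ℝ :=
  (∑ i, |x i| ^ p) ^ (1 / p)

/-- Entrywise `p`-norm of a matrix. -/
def pnormM {ι κ : Type} [Fintype ι] [Fintype κ] (p : ℝ) (x : ι → κ → ℝ) : ℝ :=
  (∑ i, ∑ j, |x i j| ^ p) ^ (1 / p)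

/-- Hölder conjugate `p' = p/(p-1)`. -/
def hconj (p : ℝ) : ℝ := p / (p - 1)

/-- `ψ_p(x) = sign(x) |x|^{p-1}`. -/
def psi (p x : ℝ) : ℝ := Real.sign x * |x| ^ (p - 1)

/-- The constraint set `S₊`. -/
def Splus (K n1 d : ℕ) (pw pu ρw ρu : ℝ) : Set (PV K n1 d) :=
  {z | (∀ i j, 0 ≤ z.1 i j) ∧ (∀ a b, 0 ≤ z.2 a b) ∧
    (∀ i, pnorm pw (z.1 i) = ρw) ∧ pnormM pu z.2 = ρu}

/-- The constraint set `S₊₊` (strictly positive entries). -/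
def Spp (K n1 d : ℕ) (pw pu ρw ρu : ℝ) : Set (PV K n1 d) :=
  {z | (∀ i j, 0 < z.1 i j) ∧ (∀ a b, 0 < z.2 a b) ∧
    (∀ i, pnorm pw (z.1 i) = ρw) ∧ pnormM pu z.2 = ρu}

/-- The set `B₊₊` (strictly positive entries, norms at most `ρ`). -/
def Bpp (K n1 d : ℕ) (pw pu ρw ρu : ℝ) : Set (PV K n1 d) :=
  {z | (∀ i j, 0 < z.1 i j) ∧ (∀ a b, 0 < z.2 a b) ∧
    (∀ i, pnorm pw (z.1 i) ≤ ρw) ∧ pnormM pu z.2 ≤ ρu}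

/-- Coordinate direction for the entry `w_{a,b}`. -/
def eW {K n1 d : ℕ} (a : Fin K) (b : Fin n1) : PV K n1 d :=
  ((fun i j => if i = a ∧ j = b then 1 else 0), 0)

/-- Coordinate direction for the entry `u_{a,b}`. -/
def eU {K n1 d : ℕ} (a : Fin n1) (b : Fin d) : PV K n1 d :=
  (0, fun i j => if i = a ∧ j = b then 1 else 0)

/-- Partial derivative `∂Φ/∂w_{a,b}`. -/
def gradW {K n1 d : ℕ} (Φ : PV K n1 d → ℝ) (z : PV K n1 d) (a : Fin K) (b : Fin n1) : ℝ :=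
  fderiv ℝ Φ z (eW a b)

/-- Partial derivative `∂Φ/∂u_{a,b}`. -/
def gradU {K n1 d : ℕ} (Φ : PV K n1 d → ℝ) (z : PV K n1 d) (a : Fin n1) (b : Fin d) : ℝ :=
  fderiv ℝ Φ z (eU a b)

/-- The power-iteration map `G^Φ`. -/
def GPhi {K n1 d : ℕ} (pw pu ρw ρu : ℝ) (Φ : PV K n1 d → ℝ) (z : PV K n1 d) : PV K n1 d :=
  ((fun i j => ρw * psi (hconj pw) (gradW Φ z i j) /
      pnorm pw (fun j' => psi (hconj pw) (gradW Φ z i j'))),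
    fun a b => ρu * psi (hconj pu) (gradU Φ z a b) /
      pnormM pu (fun a' b' => psi (hconj pu) (gradU Φ z a' b')))

/-- One-hidden-layer network `f_r(w,u)(x)`. -/
def net {K n1 d : ℕ} (α : Fin n1 → ℝ) (w : Fin K → Fin n1 → ℝ) (u : Fin n1 → Fin d → ℝ)
    (x : Fin d → ℝ) (r : Fin K) : ℝ :=
  ∑ l, w r l * (∑ m, u l m * x m) ^ α l

/-- Cross-entropy loss. -/
def loss {K : ℕ} (y : Fin K) (g : Fin K → ℝ) : ℝ :=
  -g y + Real.log (∑ j, Real.exp (g j))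

/-- The objective `Φ`. -/
def Phi {K n1 d n : ℕ} (α : Fin n1 → ℝ) (x : Fin n → Fin d → ℝ) (y : Fin n → Fin K)
    (ε : ℝ) (z : PV K n1 d) : ℝ :=
  (1 / (n : ℝ)) * ∑ i, (-loss (y i) (net α z.1 z.2 (x i)) + ∑ r, net α z.1 z.2 (x i) r)
    + ε * ((∑ r, ∑ l, z.1 r l) + ∑ l, ∑ m, z.2 l m)

/-- Spectral radius of a real square matrix: maximum modulus of its (complex) eigenvalues. -/
def specRad {m : ℕ} (A : Matrix (Fin m) (Fin m) ℝ) : ℝ :=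
  sSup {r : ℝ | ∃ μ : ℂ, μ ∈ spectrum ℂ (A.map Complex.ofReal) ∧ r = ‖μ‖}

/-- Maximum of `g` over `Fin n`, `n > 0`. -/
def finMax {n : ℕ} (hn : 0 < n) (g : Fin n → ℝ) : ℝ :=
  Finset.univ.sup' (Finset.univ_nonempty_iff.mpr (Fin.pos_iff_nonempty.mp hn)) g

/-- Weighted Thompson metric `μ` with weights `γ`. -/
def thomW {K n1 d : ℕ} (γ : Fin (K + 1) → ℝ) (z z' : PV K n1 d) : ℝ :=
  (∑ i : Fin K, γ i.castSucc *
      ‖(fun j : Fin n1 => Real.log (z.1 i j) - Real.log (z'.1 i j))‖)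
    + γ (Fin.last K) *
      ‖(fun (a : Fin n1) (b : Fin d) => Real.log (z.2 a b) - Real.log (z'.2 a b))‖

/-- The function `Ψ^α_{p,q}` from the paper. -/
def PsiF {r : ℕ} (α : Fin r → ℝ) (p q : ℝ) (δ : Fin r → ℝ) (t : ℝ) : ℝ :=
  let J : Finset (Fin r) := Finset.univ.filter fun l => α l * p ≤ q
  let Jc : Finset (Fin r) := Finset.univ.filter fun l => q < α l * p
  let ab : ℝ := if h : J.Nonempty then J.inf' h α else 0
  ((∑ l ∈ J, (δ l * t ^ α l) ^ (p * q / (q - ab * p))) ^ (1 - ab * p / q)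
    + if h : Jc.Nonempty then Jc.sup' h fun j => (δ j * t ^ α j) ^ p else 0) ^ (1 / p)

end


section aux2
variable {ι κ : Type} [Fintype ι] [Fintype κ]

theorem psi_of_pos' {p x : ℝ} (hx : 0 < x) : psi p x = x ^ (p - 1) := by
  simp [psi, Real.sign_of_pos hx, abs_of_pos hx]

theorem pnorm_smul' {p c : ℝ} (hp : p ≠ 0) (hc : 0 ≤ c) (v : ι → ℝ) :
    pnorm p (fun i => c * v i) = c * pnorm p v := by
  unfold pnorm
  have h1 : ∀ i : ι, |c * v i| ^ p = c ^ p * |v i| ^ p := fun i => by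
    rw [abs_mul, abs_of_nonneg hc, Real.mul_rpow hc (abs_nonneg _)]
  simp_rw [h1, ← Finset.mul_sum]
  rw [Real.mul_rpow (Real.rpow_nonneg hc p)
    (Finset.sum_nonneg fun i _ => Real.rpow_nonneg (abs_nonneg _) p),
    ← Real.rpow_mul hc, mul_one_div, div_self hp, Real.rpow_one]

theorem pnormM_smul' {p c : ℝ} (hp : p ≠ 0) (hc : 0 ≤ c) (v : ι → κ → ℝ) :
    pnormM p (fun i j => c * v i j) = c * pnormM p v := by
  unfold pnormM
  have h1 : ∀ (i : ι) (j : κ), |c * v i j| ^ p = c ^ p * |v i j| ^ p := fun i j => by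
    rw [abs_mul, abs_of_nonneg hc, Real.mul_rpow hc (abs_nonneg _)]
  simp_rw [h1, ← Finset.mul_sum]
  rw [Real.mul_rpow (Real.rpow_nonneg hc p)
    (Finset.sum_nonneg fun i _ => Finset.sum_nonneg fun j _ =>
      Real.rpow_nonneg (abs_nonneg _) p),
    ← Real.rpow_mul hc, mul_one_div, div_self hp, Real.rpow_one]

theorem pnorm_pos' [Nonempty ι] {p : ℝ} {v : ι → ℝ} (hv : ∀ i, 0 < v i) :
    0 < pnorm p v := by
  unfold pnorm
  exact Real.rpow_pos_of_pos (Finset.sum_pos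
    (fun i _ => Real.rpow_pos_of_pos (abs_pos.mpr (hv i).ne') p) Finset.univ_nonempty) _

theorem pnormM_pos' [Nonempty ι] [Nonempty κ] {p : ℝ} {v : ι → κ → ℝ}
    (hv : ∀ i j, 0 < v i j) : 0 < pnormM p v := by
  unfold pnormM
  exact Real.rpow_pos_of_pos (Finset.sum_pos
    (fun i _ => Finset.sum_pos
      (fun j _ => Real.rpow_pos_of_pos (abs_pos.mpr (hv i j).ne') p) Finset.univ_nonempty)
    Finset.univ_nonempty) _

end aux2

/-- For `Φ` with strictly positive gradient on `S₊₊`, a point of `S₊₊` is a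
constrained critical point of `Φ` iff it is a fixed point of `G^Φ`. -/
theorem statement2 {K n1 d : ℕ}
    (pw pu : ℝ) (hpw : 1 < pw) (hpu : 1 < pu)
    (ρw ρu : ℝ) (hρw : 0 < ρw) (hρu : 0 < ρu)
    (Φ : PV K n1 d → ℝ) (hΦ : Differentiable ℝ Φ)
    (hgrad : ∀ z ∈ Spp K n1 d pw pu ρw ρu,
      (∀ i j, 0 < gradW Φ z i j) ∧ (∀ a b, 0 < gradU Φ z a b))
    (z : PV K n1 d) (hz : z ∈ Spp K n1 d pw pu ρw ρu) :
    (∃ (lam : Fin K → ℝ) (lamu : ℝ),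
        (∀ j b, gradW Φ z j b = lam j * psi pw (z.1 j b)) ∧
        (∀ a b, gradU Φ z a b = lamu * psi pu (z.2 a b))) ↔
      GPhi pw pu ρw ρu Φ z = z := by
  obtain ⟨hw, hu, hnw, hnu⟩ := hz
  obtain ⟨hgw, hgu⟩ := hgrad z ⟨hw, hu, hnw, hnu⟩
  have hpw0 : (0:ℝ) < pw := lt_trans one_pos hpw
  have hpu0 : (0:ℝ) < pu := lt_trans one_pos hpu
  have hpw1 : (0:ℝ) < pw - 1 := by linarith
  have hpu1 : (0:ℝ) < pu - 1 := by linarith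
  have hqw : (pw - 1) * (hconj pw - 1) = 1 := by
    unfold hconj; field_simp; ring
  have hqu : (pu - 1) * (hconj pu - 1) = 1 := by
    unfold hconj; field_simp; ring
  have hn1 : 0 < n1 := by
    rcases Nat.eq_zero_or_pos n1 with h | h
    · exfalso
      subst h
      have h0 : pnormM pu z.2 = 0 := by
        unfold pnormM
        rw [Finset.univ_eq_empty, Finset.sum_empty,
          Real.zero_rpow (one_div_ne_zero hpu0.ne')]
      rw [h0] at hnu
      exact hρu.ne' hnu.symm
    · exact h
  have hd : 0 < d := by
    rcases Nat.eq_zero_or_pos d with h | h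
    · exfalso
      subst h
      have h0 : pnormM pu z.2 = 0 := by
        unfold pnormM
        simp only [Finset.univ_eq_empty, Finset.sum_empty, Finset.sum_const_zero]
        exact Real.zero_rpow (one_div_ne_zero hpu0.ne')
      rw [h0] at hnu
      exact hρu.ne' hnu.symm
    · exact h
  haveI : Nonempty (Fin n1) := ⟨⟨0, hn1⟩⟩
  haveI : Nonempty (Fin d) := ⟨⟨0, hd⟩⟩
  constructor
  · rintro ⟨lam, lamu, hlw, hlu⟩
    have hlamp : ∀ i, 0 < lam i := by
      intro i
      obtain ⟨b⟩ := (inferInstance : Nonempty (Fin n1))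
      have h := hgw i b
      rw [hlw i b, psi_of_pos' (hw i b)] at h
      nlinarith [Real.rpow_pos_of_pos (hw i b) (pw - 1)]
    have hlamup : 0 < lamu := by
      obtain ⟨a⟩ := (inferInstance : Nonempty (Fin n1))
      obtain ⟨b⟩ := (inferInstance : Nonempty (Fin d))
      have h := hgu a b
      rw [hlu a b, psi_of_pos' (hu a b)] at h
      nlinarith [Real.rpow_pos_of_pos (hu a b) (pu - 1)]
    have keyw : ∀ i j, psi (hconj pw) (gradW Φ z i j)
        = lam i ^ (hconj pw - 1) * z.1 i j := by
      intro i j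
      have hzp := Real.rpow_pos_of_pos (hw i j) (pw - 1)
      rw [hlw i j, psi_of_pos' (hw i j), psi_of_pos' (mul_pos (hlamp i) hzp),
        Real.mul_rpow (hlamp i).le hzp.le, ← Real.rpow_mul (hw i j).le, hqw,
        Real.rpow_one]
    have keyu : ∀ a b, psi (hconj pu) (gradU Φ z a b)
        = lamu ^ (hconj pu - 1) * z.2 a b := by
      intro a b
      have hzp := Real.rpow_pos_of_pos (hu a b) (pu - 1)
      rw [hlu a b, psi_of_pos' (hu a b), psi_of_pos' (mul_pos hlamup hzp),
        Real.mul_rpow hlamup.le hzp.le, ← Real.rpow_mul (hu a b).le, hqu,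
        Real.rpow_one]
    refine Prod.ext ?_ ?_
    · funext i j
      show ρw * psi (hconj pw) (gradW Φ z i j) /
        pnorm pw (fun j' => psi (hconj pw) (gradW Φ z i j')) = z.1 i j
      have hc : (0:ℝ) < lam i ^ (hconj pw - 1) := Real.rpow_pos_of_pos (hlamp i) _
      simp_rw [keyw i]
      rw [pnorm_smul' hpw0.ne' hc.le, hnw i, div_eq_iff (mul_pos hc hρw).ne']
      ring
    · funext a b
      show ρu * psi (hconj pu) (gradU Φ z a b) /
        pnormM pu (fun a' b' => psi (hconj pu) (gradU Φ z a' b')) = z.2 a b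
      have hc : (0:ℝ) < lamu ^ (hconj pu - 1) := Real.rpow_pos_of_pos hlamup _
      simp_rw [keyu]
      rw [pnormM_smul' hpu0.ne' hc.le, hnu, div_eq_iff (mul_pos hc hρu).ne']
      ring
  · intro h
    have h1 : ∀ i j, ρw * psi (hconj pw) (gradW Φ z i j) /
        pnorm pw (fun j' => psi (hconj pw) (gradW Φ z i j')) = z.1 i j :=
      fun i j => congrFun (congrFun (congrArg Prod.fst h) i) j
    have h2 : ∀ a b, ρu * psi (hconj pu) (gradU Φ z a b) /
        pnormM pu (fun a' b' => psi (hconj pu) (gradU Φ z a' b')) = z.2 a b :=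
      fun a b => congrFun (congrFun (congrArg Prod.snd h) a) b
    have hppw : ∀ i j, 0 < psi (hconj pw) (gradW Φ z i j) := fun i j => by
      rw [psi_of_pos' (hgw i j)]; exact Real.rpow_pos_of_pos (hgw i j) _
    have hppu : ∀ a b, 0 < psi (hconj pu) (gradU Φ z a b) := fun a b => by
      rw [psi_of_pos' (hgu a b)]; exact Real.rpow_pos_of_pos (hgu a b) _
    set N : Fin K → ℝ :=
      fun i => pnorm pw (fun j' => psi (hconj pw) (gradW Φ z i j')) with hNdef
    set Nu : ℝ :=
      pnormM pu (fun a' b' => psi (hconj pu) (gradU Φ z a' b')) with hNudef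
    have hN : ∀ i, 0 < N i := fun i => pnorm_pos' (hppw i)
    have hNu : 0 < Nu := pnormM_pos' hppu
    refine ⟨fun i => (N i / ρw) ^ (pw - 1), (Nu / ρu) ^ (pu - 1),
      fun i b => ?_, fun a b => ?_⟩
    · have e1 : psi (hconj pw) (gradW Φ z i b) = (N i / ρw) * z.1 i b := by
        rw [← h1 i b]
        field_simp [(hN i).ne', hρw.ne']
        exact (mul_inv_cancel_right₀ (hN i).ne' _).symm
      rw [psi_of_pos' (hgw i b)] at e1
      have e3 : (gradW Φ z i b ^ (hconj pw - 1)) ^ (pw - 1) = gradW Φ z i b := by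
        rw [← Real.rpow_mul (hgw i b).le,
          show (hconj pw - 1) * (pw - 1) = 1 by rw [mul_comm]; exact hqw,
          Real.rpow_one]
      rw [← e3, e1, Real.mul_rpow (div_nonneg (hN i).le hρw.le) (hw i b).le,
        psi_of_pos' (hw i b)]
    · have e1 : psi (hconj pu) (gradU Φ z a b) = (Nu / ρu) * z.2 a b := by
        rw [← h2 a b]
        field_simp [hNu.ne', hρu.ne']
      rw [psi_of_pos' (hgu a b)] at e1
      have e3 : (gradU Φ z a b ^ (hconj pu - 1)) ^ (pu - 1) = gradU Φ z a b := by
        rw [← Real.rpow_mul (hgu a b).le,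
          show (hconj pu - 1) * (pu - 1) = 1 by rw [mul_comm]; exact hqu,
          Real.rpow_one]
      rw [← e3, e1, Real.mul_rpow (div_nonneg hNu.le hρu.le) (hu a b).le,
        psi_of_pos' (hu a b)]
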